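/- For every even integer m > 1, the set CBFS₂(2m+2) is a non-expandable cross-bifix-free set on BF₂(2m+2); that is, for every bifix-free binary word γ of length 2m+2 with γ ∉ CBFS₂(2m+2), there exists ω ∈ CBFS₂(2m+2) such that some nonempty proper prefix of γ is a suffix of ω, or some nonempty proper prefix of ω is a suffix of γ. -/

import Mathlib

/-- A binary word (as a list of Booleans, `true` = 1, `false` = 0) is a Dyck word
if it has as many 1s as 0s and every prefix has at least as many 1s as 0s. -/
def IsDyck (w : List Bool) : Prop :=
  w.count true = w.count false ∧
  ∀ p : List Bool, p <+: w → p.count false ≤ p.count true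

/-- `DyckLen w n` : `w` is a Dyck word of length `n`. -/
def DyckLen (w : List Bool) (n : ℕ) : Prop := IsDyck w ∧ w.length = n

/-- A word is bifix-free if no nonempty proper prefix of it is also a suffix of it. -/
def BifixFree {A : Type*} (w : List A) : Prop :=
  ∀ p : List A, p ≠ [] → p <+: w → p ≠ w → ¬ p <:+ w

/-- Two (distinct, same-length) words are cross-bifix-free if no nonempty proper
prefix of either one is a suffix of the other. -/
def CrossBifixFree {A : Type*} (w w' : List A) : Prop :=
  (∀ p : List A, p ≠ [] → p <+: w → p ≠ w → ¬ p <:+ w') ∧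
  (∀ p : List A, p ≠ [] → p <+: w' → p ≠ w' → ¬ p <:+ w)

/-- The set of bifix-free binary words of length `n`. -/
def BF (n : ℕ) : Set (List Bool) := {w | w.length = n ∧ BifixFree w}

/-- `CBFS₂(2m+1)` : words `1·α` where `α` is a Dyck word of length `2m`. -/
def CBFSodd (m : ℕ) : Set (List Bool) :=
  {w | ∃ α : List Bool, DyckLen α (2 * m) ∧ w = true :: α}

/-- `CBFS₂(2m+2)` for even `m > 1` : words `α·1·β·0` with `α` a Dyck word of length `2i`,
`β` a Dyck word of length `2(m-i)`, `0 ≤ i ≤ m/2`. -/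
def CBFSevenE (m : ℕ) : Set (List Bool) :=
  {w | ∃ (i : ℕ) (α β : List Bool), i ≤ m / 2 ∧ DyckLen α (2 * i) ∧
    DyckLen β (2 * (m - i)) ∧ w = α ++ true :: β ++ [false]}

/-- `CBFS₂(2m+2)` for odd `m ≥ 1` : words `α·1·β·0` with `α` a Dyck word of length `2i`,
`β` a Dyck word of length `2(m-i)`, `0 ≤ i ≤ (m+1)/2`, excluding the words
`1·α'·0·1·β'·0` with `α'`, `β'` Dyck words of length `m-1`. -/
def CBFSevenO (m : ℕ) : Set (List Bool) :=
  {w | ∃ (i : ℕ) (α β : List Bool), i ≤ (m + 1) / 2 ∧ DyckLen α (2 * i) ∧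
    DyckLen β (2 * (m - i)) ∧ w = α ++ true :: β ++ [false]} \
  {w | ∃ α' β' : List Bool, DyckLen α' (m - 1) ∧ DyckLen β' (m - 1) ∧
    w = true :: α' ++ false :: true :: β' ++ [false]}


/-- `(10)^k` -/
def tf : ℕ → List Bool
  | 0 => []
  | k+1 => true :: false :: tf k

lemma tf_length (k : ℕ) : (tf k).length = 2 * k := by
  induction k with
  | zero => rfl
  | succ k ih => simp only [tf, List.length_cons, ih]; omega

lemma tf_dom (k : ℕ) : ∀ p, p <+: tf k → p.count false ≤ p.count true := by
  induction k with
  | zero => intro p hp; rw [List.prefix_nil.mp hp]; simp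
  | succ k ih =>
    intro p hp
    rcases p with _ | ⟨a, p⟩
    · simp
    rw [tf] at hp
    obtain ⟨rfl, hp'⟩ := List.cons_prefix_cons.mp hp
    rcases p with _ | ⟨b, p⟩
    · simp
    obtain ⟨rfl, hp''⟩ := List.cons_prefix_cons.mp hp'
    have := ih p hp''
    simp [List.count_cons]; omega

lemma tf_count_true (k : ℕ) : (tf k).count true = k := by
  induction k with
  | zero => rfl
  | succ k ih => simp [tf, List.count_cons, ih]

lemma tf_count_false (k : ℕ) : (tf k).count false = k := by
  induction k with
  | zero => rfl
  | succ k ih => simp [tf, List.count_cons, ih]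

lemma tf_dyck (k : ℕ) : IsDyck (tf k) :=
  ⟨by rw [tf_count_true, tf_count_false], tf_dom k⟩

lemma dyck_nil : IsDyck ([] : List Bool) :=
  ⟨rfl, fun p hp => by rw [List.prefix_nil.mp hp]; simp⟩

lemma dyck_append {a b : List Bool} (ha : IsDyck a) (hb : IsDyck b) :
    IsDyck (a ++ b) := by
  constructor
  · simp [List.count_append, ha.1, hb.1]
  · intro p hp
    by_cases hl : p.length ≤ a.length
    · exact ha.2 p (List.prefix_of_prefix_length_le hp (List.prefix_append a b) hl)
    · have hap : a <+: p :=
        List.prefix_of_prefix_length_le (List.prefix_append a b) hp (by omega)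
      obtain ⟨q, rfl⟩ := hap
      have hq : q <+: b := (List.prefix_append_right_inj a).mp hp
      have := hb.2 q hq
      simp [List.count_append, ha.1]; omega

/-- height after `n` steps -/
def ht (w : List Bool) (n : ℕ) : ℤ :=
  ((w.take n).count true : ℤ) - ((w.take n).count false : ℤ)

lemma ht_zero (w : List Bool) : ht w 0 = 0 := by simp [ht]

lemma ht_stable {w : List Bool} {n : ℕ} (h : w.length ≤ n) : ht w n = ht w w.length := by
  rw [ht, ht, List.take_of_length_le h, List.take_length]

lemma ht_succ (w : List Bool) (n : ℕ) (h : n < w.length) :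
    ht w (n+1) = ht w n + (if w[n] = true then 1 else -1) := by
  rw [ht, ht, List.take_succ, List.getElem?_eq_getElem h]
  rcases hb : w[n] with _ | _ <;>
    simp [hb, List.count_append, List.count_cons] <;> push_cast <;> ring

lemma ht_step_le (w : List Bool) (n : ℕ) : ht w (n+1) ≤ ht w n + 1 := by
  by_cases h : n < w.length
  · rw [ht_succ w n h]; split <;> omega
  · have h1 : ht w (n+1) = ht w w.length := ht_stable (by omega)
    have h2 : ht w n = ht w w.length := ht_stable (by omega)
    omega

lemma ivt (w : List Bool) (a b : ℕ) (v : ℤ) (hab : a ≤ b) (h1 : ht w a ≤ v)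
    (h2 : v ≤ ht w b) : ∃ j, a ≤ j ∧ j ≤ b ∧ ht w j = v := by
  induction b with
  | zero => exact ⟨0, by omega, le_refl 0, by interval_cases a; omega⟩
  | succ b ih =>
    rcases Nat.lt_or_ge a (b+1) with hab' | hab'
    · by_cases hv : v ≤ ht w b
      · obtain ⟨j, h3, h4, h5⟩ := ih (by omega) hv
        exact ⟨j, h3, by omega, h5⟩
      · have := ht_step_le w b
        exact ⟨b+1, by omega, le_refl _, by omega⟩
    · obtain rfl : a = b + 1 := by omega
      exact ⟨b+1, le_refl _, le_refl _, by omega⟩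

lemma ht_parity (w : List Bool) (n : ℕ) (h : n ≤ w.length) :
    ht w n + n = 2 * ((w.take n).count true : ℤ) := by
  have hc : (w.take n).count true + (w.take n).count false = (w.take n).length := by
    induction (w.take n) with
    | nil => rfl
    | cons a l ih => rcases a <;> simp [List.count_cons] <;> omega
  have hl : (w.take n).length = n := by rw [List.length_take]; omega
  rw [ht]; omega

lemma ht_drop (w : List Bool) (t n : ℕ) :
    ht (w.drop t) n = ht w (t + n) - ht w t := by
  have h : w.take (t + n) = w.take t ++ (w.drop t).take n := List.take_add
  rw [ht, ht, ht, h, List.count_append, List.count_append]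
  push_cast; ring

lemma ht_take (w : List Bool) (k n : ℕ) : ht (w.take k) n = ht w (min n k) := by
  rw [ht, ht, List.take_take]

lemma isDyck_of_ht {w : List Bool} (hbal : ht w w.length = 0)
    (hdom : ∀ n, n ≤ w.length → 0 ≤ ht w n) : IsDyck w := by
  constructor
  · rw [ht, List.take_length] at hbal; omega
  · intro p hp
    have h1 : p = w.take p.length := List.prefix_iff_eq_take.mp hp
    have h2 : p.length ≤ w.length := hp.length_le
    have := hdom p.length h2
    rw [ht, ← h1] at this; omega

theorem CBFSevenE_nonexpandable (m : ℕ) (hm : 1 < m) (hme : Even m) (γ : List Bool)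
    (hγ : γ ∈ BF (2 * m + 2)) (hγn : γ ∉ CBFSevenE m) :
    ∃ ω ∈ CBFSevenE m,
      (∃ p : List Bool, p ≠ [] ∧ p <+: γ ∧ p ≠ γ ∧ p <:+ ω) ∨
      (∃ p : List Bool, p ≠ [] ∧ p <+: ω ∧ p ≠ ω ∧ p <:+ γ) := by
  obtain ⟨hlen, hbf⟩ := hγ
  have htake1 : γ.take 1 = [γ[0]'(by omega)] := by
    rw [List.take_succ, List.getElem?_eq_getElem (by omega)]; rfl
  by_cases h0 : γ[0]'(by omega) = true
  swap
  · -- Case 1 : γ starts with 0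
    have h0f : γ[0]'(by omega) = false := by simpa using h0
    refine ⟨true :: tf m ++ [false],
      ⟨0, [], tf m, Nat.zero_le _, ⟨dyck_nil, by simp⟩,
        ⟨tf_dyck m, by simp [tf_length]⟩, by simp⟩,
      Or.inl ⟨[false], by simp, ?_, ?_, ⟨true :: tf m, by simp⟩⟩⟩
    · rw [← h0f, ← htake1]; exact List.take_prefix 1 γ
    · intro h
      have := congrArg List.length h
      simp [hlen] at this
  · -- Case 2 : γ starts with 1
    -- last letter is 0
    have hlast : γ[2*m+1]'(by omega) = false := by
      by_contra hc
      have hc' : γ[2*m+1]'(by omega) = true := by simpa using hc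
      refine hbf [true] (by simp) ?_ ?_ ?_
      · rw [← h0, ← htake1]; exact List.take_prefix 1 γ
      · intro h; have := congrArg List.length h; simp [hlen] at this
      · refine ⟨γ.take (2*m+1), ?_⟩
        have := List.take_succ (l := γ) (i := 2*m+1)
        rw [List.getElem?_eq_getElem (by omega), hc'] at this
        simp only [Option.toList_some] at this
        rw [← this]; exact List.take_of_length_le (by omega)
    have hdroplast : γ.drop (2*m+1) = [false] := by
      rw [List.drop_eq_getElem_cons (by omega : 2*m+1 < γ.length), hlast,
        List.drop_eq_nil_of_le (by omega)]
    have hhL : ht γ (2*m+2) = ht γ (2*m+1) - 1 := by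
      have h := ht_succ γ (2*m+1) (by omega)
      rw [hlast] at h; simp at h
      rw [show 2*m+1+1 = 2*m+2 from rfl] at h; omega
    by_cases hdom : ∀ n, 0 ≤ ht γ n
    · -- γ is 1-dominated
      have hpartot := ht_parity γ (2*m+2) (by omega)
      have hcase : ht γ (2*m+2) = 0 ∨ 2 ≤ ht γ (2*m+2) := by
        have := hdom (2*m+2); omega
      rcases hcase with hS0 | hS2
      · -- 2b-i : γ is a Dyck word
        have h2m1 : ht γ (2*m+1) = 1 := by omega
        obtain ⟨t, hPt, htle, hgreat⟩ :
            ∃ t, ht γ t = 0 ∧ t ≤ 2*m+1 ∧ ∀ j, t < j → j ≤ 2*m+1 → ¬ ht γ j = 0 :=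
          ⟨Nat.findGreatest (fun j => ht γ j = 0) (2*m+1),
            Nat.findGreatest_spec (P := fun j => ht γ j = 0) (Nat.zero_le _) (ht_zero γ),
            Nat.findGreatest_le _, fun j a b => Nat.findGreatest_is_greatest a b⟩
        obtain ⟨u, htu⟩ : ∃ u, t = 2*u := by
          have := ht_parity γ t (by omega); exact ⟨t/2, by omega⟩
        have hmt : m < t := by
          by_contra hle
          push_neg at hle
          apply hγn
          have htlt : t < γ.length := by omega
          have hst := ht_succ γ t htlt
          have hγt : γ[t] = true := by
            cases hb : γ[t]
            · rw [hb] at hst; simp at hst; have := hdom (t+1); omega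
            · rfl
          have hst1 : ht γ (t+1) = 1 := by rw [hγt] at hst; simp at hst; omega
          have hmidlen : ((γ.drop (t+1)).take (2*m - t)).length = 2*m - t := by
            simp [hlen]; omega
          refine ⟨u, γ.take t, (γ.drop (t+1)).take (2*m - t), by omega, ⟨?_, ?_⟩, ⟨?_, ?_⟩, ?_⟩
          · apply isDyck_of_ht
            · have hlt : (γ.take t).length = t := by rw [List.length_take]; omega
              rw [hlt, ht_take, min_self]; exact hPt
            · intro n hn; rw [ht_take]; exact hdom _
          · rw [List.length_take]; omega
          · apply isDyck_of_ht
            · rw [hmidlen, ht_take, min_self, ht_drop]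
              have e : t + 1 + (2*m - t) = 2*m+1 := by omega
              rw [e]; omega
            · intro n hn
              rw [ht_take, ht_drop]
              have hj1 : t < t + 1 + min n (2*m - t) := by omega
              have hj2 : t + 1 + min n (2*m - t) ≤ 2*m+1 := by omega
              have := hgreat _ hj1 hj2
              have := hdom (t + 1 + min n (2*m - t))
              omega
          · rw [hmidlen]; omega
          · have key : γ.take t ++ true :: ((γ.drop (t+1)).take (2*m - t) ++ [false]) = γ := by
              rw [← hγt, ← hdroplast,
                show γ.drop (2*m+1) = (γ.drop (t+1)).drop (2*m - t) from by
                  rw [List.drop_drop]; congr 1; omega,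
                List.take_append_drop, ← List.drop_eq_getElem_cons htlt,
                List.take_append_drop]
            simpa [List.cons_append, List.append_assoc] using key.symm
        obtain ⟨v, hmv⟩ := hme
        have hmt2 : m + 2 ≤ t := by omega
        have hflen : (γ.drop t).length = 2*m+2 - t := by simp [hlen]
        have hfdyck : IsDyck (γ.drop t) := by
          apply isDyck_of_ht
          · rw [hflen, ht_drop]
            have e : t + (2*m+2 - t) = 2*m+2 := by omega
            rw [e]; omega
          · intro n hn; rw [ht_drop]; have := hdom (t + n); omega
        refine ⟨γ.drop t ++ true :: tf (u - 1) ++ [false],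
          ⟨m + 1 - u, γ.drop t, tf (u - 1), by omega, ⟨hfdyck, by omega⟩,
            ⟨tf_dyck _, by rw [tf_length]; omega⟩, rfl⟩,
          Or.inr ⟨γ.drop t, ?_, ?_, ?_, List.drop_suffix t γ⟩⟩
        · intro h; rw [h] at hflen; simp at hflen; omega
        · exact (List.prefix_append _ _).trans (List.prefix_append _ _)
        · intro h
          have := congrArg List.length h
          simp [hflen, tf_length] at this
      · -- 2b-ii : γ is 1-dominated with positive surplus
        obtain ⟨j0, hj0le, hj0⟩ : ∃ j, j ≤ 2*m+2 ∧ ht γ j = ht γ (2*m+2) - 1 := by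
          obtain ⟨j, h1, h2, h3⟩ := ivt γ 0 (2*m+2) (ht γ (2*m+2) - 1) (by omega)
            (by rw [ht_zero]; omega) (by omega)
          exact ⟨j, h2, h3⟩
        obtain ⟨T, hPT, hTle, hgreat⟩ :
            ∃ T, ht γ T = ht γ (2*m+2) - 1 ∧ T ≤ 2*m+2 ∧
              ∀ j, T < j → j ≤ 2*m+2 → ¬ ht γ j = ht γ (2*m+2) - 1 :=
          ⟨Nat.findGreatest (fun j => ht γ j = ht γ (2*m+2) - 1) (2*m+2),
            Nat.findGreatest_spec (P := fun j => ht γ j = ht γ (2*m+2) - 1) hj0le hj0,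
            Nat.findGreatest_le _,
            fun j a b => Nat.findGreatest_is_greatest a b⟩
        have hT0 : T ≠ 0 := by intro h; rw [h, ht_zero] at hPT; omega
        have hT2m : T ≤ 2*m := by
          rcases Nat.lt_or_ge T (2*m+1) with h | h
          · omega
          · exfalso
            have : T = 2*m+1 ∨ T = 2*m+2 := by omega
            rcases this with rfl | rfl <;> omega
        have hA : ∀ j, T < j → j ≤ 2*m+2 → ht γ (2*m+2) ≤ ht γ j := by
          intro j h1 h2
          by_contra hc
          push_neg at hc
          have hne := hgreat j h1 h2
          obtain ⟨j', hj'1, hj'2, hj'3⟩ := ivt γ j (2*m+2) (ht γ (2*m+2) - 1) h2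
            (by omega) (by omega)
          exact hgreat j' (by omega) hj'2 hj'3
        have hTlt : T < γ.length := by omega
        have hst := ht_succ γ T hTlt
        have hγT : γ[T] = true := by
          have := hA (T+1) (by omega) (by omega)
          cases hb : γ[T]
          · rw [hb] at hst; simp at hst; omega
          · rfl
        have hsT1 : ht γ (T+1) = ht γ (2*m+2) := by rw [hγT] at hst; simp at hst; omega
        obtain ⟨u, hTu⟩ : ∃ u, T = 2*u + 1 := by
          have hpT := ht_parity γ T (by omega)
          exact ⟨(T-1)/2, by omega⟩
        have hq'len : (γ.drop (T+1)).length = 2*m+1 - T := by simp [hlen]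
        have hq'dyck : IsDyck (γ.drop (T+1)) := by
          apply isDyck_of_ht
          · rw [hq'len, ht_drop]
            have e : T + 1 + (2*m+1 - T) = 2*m+2 := by omega
            rw [e]; omega
          · intro n hn
            rw [hq'len] at hn
            rw [ht_drop]
            have := hA (T+1+n) (by omega) (by omega)
            omega
        have hdT : γ.drop T = γ[T] :: γ.drop (T+1) := List.drop_eq_getElem_cons hTlt
        refine ⟨true :: (γ.drop (T+1) ++ tf u) ++ [false],
          ⟨0, [], γ.drop (T+1) ++ tf u, Nat.zero_le _, ⟨dyck_nil, by simp⟩,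
            ⟨dyck_append hq'dyck (tf_dyck u), by simp [hq'len, tf_length]; omega⟩, by simp⟩,
          Or.inr ⟨γ.drop T, ?_, ?_, ?_, List.drop_suffix T γ⟩⟩
        · simp [hlen]; omega
        · rw [hdT, hγT]
          exact (List.cons_prefix_cons.mpr
            ⟨rfl, List.prefix_append _ _⟩).trans (List.prefix_append _ _)
        · intro h
          have := congrArg List.length h
          simp [hlen, hq'len, tf_length] at this
          omega
    · -- Case 2a : some prefix of γ has more 0s than 1s
      push_neg at hdom
      obtain ⟨n0, hn0⟩ := hdom
      have hexfind : ∃ n, ht γ n < 0 := ⟨n0, by omega⟩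
      obtain ⟨t, hPt, hmin⟩ : ∃ t, ht γ t < 0 ∧ ∀ j, j < t → 0 ≤ ht γ j :=
        ⟨Nat.find hexfind, Nat.find_spec hexfind,
          fun j hj => not_lt.mp (Nat.find_min hexfind hj)⟩
      have ht0 : t ≠ 0 := by intro h; rw [h, ht_zero] at hPt; omega
      have htlen : t ≤ 2*m+2 := by
        by_contra hc
        push_neg at hc
        have e : ht γ t = ht γ (2*m+2) := by
          rw [ht_stable (by omega : γ.length ≤ t), hlen]
        have := hmin (2*m+2) (by omega)
        omega
      obtain ⟨d, rfl⟩ : ∃ d, t = d + 1 := ⟨t-1, by omega⟩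
      have hstep := ht_succ γ d (by omega)
      have hd0 : 0 ≤ ht γ d := hmin d (by omega)
      have hγd : γ[d] = false := by
        cases hb : γ[d]
        · rfl
        · rw [hb] at hstep; simp at hstep; omega
      have hhd : ht γ d = 0 := by rw [hγd] at hstep; simp at hstep; omega
      obtain ⟨e, hde⟩ : ∃ e, d = 2*e := by
        have := ht_parity γ d (by omega); exact ⟨d/2, by omega⟩
      have hDlen : (γ.take d).length = d := by rw [List.length_take]; omega
      have hDdyck : IsDyck (γ.take d) := by
        apply isDyck_of_ht
        · rw [hDlen, ht_take, min_self]; exact hhd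
        · intro n hn; rw [ht_take]; exact hmin (min n d) (by omega)
      have hp' : γ.take (d+1) = γ.take d ++ [false] := by
        rw [List.take_succ, List.getElem?_eq_getElem (by omega : d < γ.length), hγd]; rfl
      refine ⟨true :: (tf (m - e) ++ γ.take d) ++ [false],
        ⟨0, [], tf (m - e) ++ γ.take d, Nat.zero_le _, ⟨dyck_nil, by simp⟩,
          ⟨dyck_append (tf_dyck _) hDdyck, by simp [tf_length, hDlen]; omega⟩, by simp⟩,
        Or.inl ⟨γ.take (d+1), ?_, List.take_prefix _ _, ?_, ?_⟩⟩
      · rw [hp']; simp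
      · intro h
        have := congrArg List.length h
        rw [List.length_take, hlen] at this
        omega
      · rw [hp']
        exact ⟨true :: tf (m - e), by simp⟩
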